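/- For t ≥ 2, the number of partitions with distinct parts of maximal size among those that are simultaneously t-core and (t+1)-core is 2 if t ≡ 1 (mod 3), and 1 otherwise. -/

import Mathlib

/-- The hook length of the box in row i (0-indexed) and column j (1-indexed) of the Young
diagram of the partition (λ_1, ..., λ_ℓ): arm + leg + 1. -/
def hook (l : List ℕ) (i j : ℕ) : ℕ :=
  (l.getD i 0 - j) + ((l.drop (i + 1)).filter (fun p => decide (j ≤ p))).length + 1

/-- A partition is an s-core if none of its hook lengths equals s. -/
def IsCore (l : List ℕ) (s : ℕ) : Prop :=
  ∀ i j, i < l.length → 1 ≤ j → j ≤ l.getD i 0 → hook l i j ≠ s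

/-! ### Auxiliary lemmas -/

lemma filt_step (L : List ℕ) (hL : L.Nodup) (j : ℕ) :
    (L.filter (fun p => decide (j ≤ p))).length ≤ (L.filter (fun p => decide (j+1 ≤ p))).length + 1 := by
  induction L with
  | nil => simp
  | cons x L ih =>
    rw [List.nodup_cons] at hL
    obtain ⟨hx, hL⟩ := hL
    by_cases h1 : j + 1 ≤ x
    · have h0 : j ≤ x := by omega
      rw [List.filter_cons_of_pos (by simpa using h0), List.filter_cons_of_pos (by simpa using h1)]
      simp only [List.length_cons]
      simpa using ih hL
    · by_cases h0 : j ≤ x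
      · have hxj : x = j := by omega
        simp only [List.filter_cons]
        rw [show (decide (j ≤ x)) = true by simpa using h0,
            show (decide (j+1 ≤ x)) = false by simpa using h1]
        simp only [if_true, if_false, List.length_cons, cond_true, cond_false]
        have : L.filter (fun p => decide (j ≤ p)) = L.filter (fun p => decide (j+1 ≤ p)) := by
          apply List.filter_congr
          intro p hp
          have : p ≠ j := by rintro rfl; exact hx (by simpa [hxj] using hp)
          simp only [decide_eq_decide]
          omega
        rw [this]; simp
      · rw [List.filter_cons_of_neg (by simpa using h0),
            List.filter_cons_of_neg (by simpa using h1)]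
        exact ih hL

lemma list_sum_getD (l : List ℕ) : l.sum = ∑ i ∈ Finset.range l.length, l.getD i 0 := by
  induction l with
  | nil => simp
  | cons x l ih =>
    rw [List.sum_cons, List.length_cons, Finset.sum_range_succ', ih]
    simp [List.getD_cons_succ]
    ring

lemma sorted_getD (l : List ℕ) (h : l.Pairwise (· > ·)) (i : ℕ) (hi : i < l.length) :
    l.getD i 0 + i ≤ l.getD 0 0 := by
  induction i with
  | zero => simp
  | succ n ih =>
    have hn : n < l.length := by omega
    have h1 := ih hn
    have h2 : l.getD (n+1) 0 < l.getD n 0 := by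
      rw [List.getD_eq_getElem _ _ hi, List.getD_eq_getElem _ _ hn]
      exact List.pairwise_iff_get.1 h ⟨n, hn⟩ ⟨n+1, hi⟩ (by simp)
    omega

lemma core_of_small (l : List ℕ) (s : ℕ) (hl : l.Pairwise (· > ·))
    (hs : l.getD 0 0 + l.length ≤ s) : IsCore l s := by
  intro i j hi hj1 hj2 hcon
  have h1 := sorted_getD l hl i hi
  have h2 : ((l.drop (i+1)).filter (fun p => decide (j ≤ p))).length ≤ l.length - (i+1) := by
    calc _ ≤ (l.drop (i+1)).length := List.length_filter_le _ _
    _ = l.length - (i+1) := List.length_drop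
  unfold hook at hcon
  omega

lemma hitting (a n : ℕ) (c : ℕ → ℕ) (ha : 1 ≤ a) (hn : 1 ≤ n)
    (hc1 : c 1 = n - 1) (hca : c a = 0)
    (hstep : ∀ j, 1 ≤ j → j < a → c j ≤ c (j+1) + 1)
    (v : ℕ) (hv1 : 1 ≤ v) (hv2 : v ≤ a + n - 1) :
    ∃ j, 1 ≤ j ∧ j ≤ a ∧ ((a - j) + c j + 1 = v ∨ (a - j) + c j + 1 = v + 1) := by
  have aux : ∀ d, d < a → ∀ v, 1 ≤ v → v ≤ (a - (a - d)) + c (a - d) + 1 →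
      ∃ j, 1 ≤ j ∧ j ≤ a ∧ ((a - j) + c j + 1 = v ∨ (a - j) + c j + 1 = v + 1) := by
    intro d
    induction d with
    | zero =>
      intro _ v hv1 hv2
      have e : a - 0 = a := by omega
      rw [e, hca] at hv2
      refine ⟨a, ha, le_refl _, ?_⟩
      rw [hca]
      omega
    | succ d ih =>
      intro hd v hv1 hv2
      by_cases hle : v ≤ (a - (a - d)) + c (a - d) + 1
      · exact ih (by omega) v hv1 hle
      · push_neg at hle
        set j0 := a - (d + 1) with hj0
        have hj01 : 1 ≤ j0 := by omega
        have hj0a : j0 < a := by omega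
        have hstep' := hstep j0 hj01 hj0a
        have hsucc : j0 + 1 = a - d := by omega
        rw [hsucc] at hstep'
        refine ⟨j0, hj01, by omega, ?_⟩
        omega
  have := aux (a - 1) (by omega) v hv1 ?_
  · exact this
  · have : a - (a - 1) = 1 := by omega
    rw [this, hc1]
    omega

lemma bound_of_core (l : List ℕ) (t : ℕ) (hl : l.Pairwise (· > ·)) (hpos : ∀ p ∈ l, 0 < p)
    (hne : l ≠ []) (ht : 1 ≤ t) (h1 : IsCore l t) (h2 : IsCore l (t+1)) :
    l.getD 0 0 + l.length ≤ t := by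
  by_contra hcon
  push_neg at hcon
  obtain ⟨x, tl, rfl⟩ := List.exists_cons_of_ne_nil hne
  rw [List.pairwise_cons] at hl
  obtain ⟨hx, htl⟩ := hl
  have hxpos : 0 < x := hpos x (by simp)
  set a := (x :: tl).getD 0 0 with hadef
  have haa : a = x := by simp [hadef]
  set n := (x :: tl).length with hndef
  have hnn : n = tl.length + 1 := by simp [hndef]
  set c : ℕ → ℕ := fun j => (tl.filter (fun p => decide (j ≤ p))).length with hc
  have hc1 : c 1 = n - 1 := by
    have : tl.filter (fun p => decide (1 ≤ p)) = tl := by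
      apply List.filter_eq_self.2
      intro p hp
      simpa [Nat.one_le_iff_ne_zero, Nat.pos_iff_ne_zero] using hpos p (by simp [hp])
    simp only [hc, this, hnn]
    omega
  have hca : c a = 0 := by
    have : tl.filter (fun p => decide (a ≤ p)) = [] := by
      apply List.filter_eq_nil_iff.2
      intro p hp
      have := hx p hp
      simp only [decide_eq_true_eq]
      omega
    simp [hc, this]
  have hstep : ∀ j, 1 ≤ j → j < a → c j ≤ c (j+1) + 1 :=
    fun j _ _ => filt_step tl htl.nodup j
  have hhook : ∀ j, hook (x :: tl) 0 j = (a - j) + c j + 1 := by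
    intro j; rfl
  obtain ⟨j, hj1, hja, hj⟩ := hitting a n c (by omega) (by omega) hc1 hca hstep t ht (by omega)
  rcases hj with h | h
  · exact h1 0 j (by omega) hj1 (by omega) (by rw [hhook]; exact h)
  · exact h2 0 j (by omega) hj1 (by omega) (by rw [hhook]; exact h)

lemma gauss_int (s : ℤ) (n : ℕ) :
    2 * ∑ i ∈ Finset.range n, (s - (i:ℤ)) = n * (2*s - n + 1) := by
  induction n with
  | zero => simp
  | succ n ih =>
    rw [Finset.sum_range_succ, mul_add, ih]
    push_cast
    ring

lemma six_m (t : ℕ) : t*(t+1) = 6*(t*(t+1)/6) + (if t % 3 = 1 then 2 else 0) := by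
  have h6 : t % 6 < 6 := Nat.mod_lt _ (by norm_num)
  obtain ⟨k, hk⟩ : ∃ k, t = 6*k + t % 6 := ⟨t/6, by omega⟩
  set r := t % 6 with hr
  have h3 : t % 3 = r % 3 := by omega
  rw [h3]
  have key : ∀ E c : ℕ, c < 6 → t*(t+1) = 6*E + c → t*(t+1) = 6*(t*(t+1)/6) + c := by
    intro E c hc h
    rw [h]
    omega
  clear_value r
  interval_cases r
  · simpa using key (6*(k*k)+k) 0 (by norm_num) (by rw [hk]; ring)
  · simpa using key (6*(k*k)+3*k) 2 (by norm_num) (by rw [hk]; ring)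
  · simpa using key (6*(k*k)+5*k+1) 0 (by norm_num) (by rw [hk]; ring)
  · simpa using key (6*(k*k)+7*k+2) 0 (by norm_num) (by rw [hk]; ring)
  · simpa using key (6*(k*k)+9*k+3) 2 (by norm_num) (by rw [hk]; ring)
  · simpa using key (6*(k*k)+11*k+5) 0 (by norm_num) (by rw [hk]; ring)

lemma F_int (t n : ℕ) (h2 : 2*n ≤ t) :
    6 * ((∑ i ∈ Finset.range n, (t - n - i) : ℕ) : ℤ) =
      (t:ℤ)*(t+1) - ((t:ℤ) - 3*n)*((t:ℤ) - 3*n + 1) := by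
  have hcast : ((∑ i ∈ Finset.range n, (t - n - i) : ℕ) : ℤ) =
      ∑ i ∈ Finset.range n, (((t:ℤ) - n) - (i:ℤ)) := by
    rw [Nat.cast_sum]
    apply Finset.sum_congr rfl
    intro i hi
    rw [Finset.mem_range] at hi
    omega
  rw [hcast, show (6:ℤ) = 3 * 2 by norm_num, mul_assoc, gauss_int]
  ring

lemma F_facts (t n : ℕ) (hn : 1 ≤ n) (h2 : 2*n ≤ t) :
    (∑ i ∈ Finset.range n, (t - n - i) : ℕ) ≤ t*(t+1)/6 ∧
    ((∑ i ∈ Finset.range n, (t - n - i) : ℕ) = t*(t+1)/6 ↔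
      (t % 3 = 0 ∧ t = 3*n) ∨ (t % 3 = 1 ∧ (t = 3*n + 1 ∨ t + 2 = 3*n)) ∨
      (t % 3 = 2 ∧ t + 1 = 3*n)) := by
  have hF := F_int t n h2
  have hm := six_m t
  set F : ℕ := ∑ i ∈ Finset.range n, (t - n - i) with hFdef
  set m : ℕ := t*(t+1)/6 with hmdef
  clear_value F m
  set U : ℤ := (t:ℤ) - 3*n with hU
  set P : ℤ := U*(U+1) with hP
  have hq : ((t:ℤ))*(t+1) = ((t*(t+1) : ℕ) : ℤ) := by push_cast; ring
  rcases eq_or_ne (t % 3) 1 with h3 | h3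
  · rw [if_pos h3] at hm
    have hU3 : U % 3 = 1 := by omega
    have hPge : 2 ≤ P := by
      rcases le_or_gt 1 U with h | h
      · nlinarith
      · have : U ≤ -2 := by omega
        nlinarith
    have hle : F ≤ m := by omega
    refine ⟨hle, ?_, ?_⟩
    · intro hFm
      have hP2 : P = 2 := by omega
      have hfac : (U - 1) * (U + 2) = 0 := by linear_combination hP2
      rcases mul_eq_zero.1 hfac with h | h
      · exact Or.inr (Or.inl ⟨h3, Or.inl (by omega)⟩)
      · exact Or.inr (Or.inl ⟨h3, Or.inr (by omega)⟩)
    · rintro (⟨h0, _⟩ | ⟨_, hor⟩ | ⟨h0, _⟩)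
      · omega
      · have hP2 : P = 2 := by
          rcases hor with h | h
          · have : U = 1 := by omega
            rw [hP, this]; norm_num
          · have : U = -2 := by omega
            rw [hP, this]; norm_num
        omega
      · omega
  · rw [if_neg h3] at hm
    have hU3 : U % 3 ≠ 1 := by omega
    have hPge : 0 ≤ P := by
      rcases le_or_gt 0 U with h | h
      · nlinarith
      · have : U ≤ -1 := by omega
        nlinarith
    have hle : F ≤ m := by omega
    refine ⟨hle, ?_, ?_⟩
    · intro hFm
      have hP0 : P = 0 := by omega
      rcases mul_eq_zero.1 (hP ▸ hP0) with h | h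
      · exact Or.inl ⟨by omega, by omega⟩
      · exact Or.inr (Or.inr ⟨by omega, by omega⟩)
    · rintro (⟨h0, he⟩ | ⟨h1, _⟩ | ⟨h0, he⟩)
      · have hU0 : U = 0 := by omega
        have : P = 0 := by rw [hP, hU0]; norm_num
        omega
      · omega
      · have hU0 : U = -1 := by omega
        have : P = 0 := by rw [hP, hU0]; norm_num
        omega

/-! ### The runs of consecutive integers -/

def run (t n : ℕ) : List ℕ := (List.range n).map (fun i => t - n - i)

lemma run_length (t n : ℕ) : (run t n).length = n := by simp [run]

lemma run_getD (t n i : ℕ) (h : i < n) : (run t n).getD i 0 = t - n - i := by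
  rw [List.getD_eq_getElem _ _ (by simpa [run] using h)]
  simp [run]

lemma run_sorted (t n : ℕ) (h2 : 2*n ≤ t) : (run t n).Pairwise (· > ·) := by
  rw [List.pairwise_iff_get]
  intro i j hij
  have hi : (i:ℕ) < n := by have := i.2; simpa [run] using this
  have hj : (j:ℕ) < n := by have := j.2; simpa [run] using this
  have e1 : (run t n).get i = t - n - i := by
    rw [List.get_eq_getElem]; simp [run]
  have e2 : (run t n).get j = t - n - j := by
    rw [List.get_eq_getElem]; simp [run]
  rw [e1, e2]
  have : (i:ℕ) < (j:ℕ) := hij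
  omega

lemma run_pos (t n : ℕ) (h2 : 2*n ≤ t) : ∀ p ∈ run t n, 0 < p := by
  intro p hp
  simp only [run, List.mem_map, List.mem_range] at hp
  obtain ⟨i, hi, rfl⟩ := hp
  omega

lemma map_range_sum (f : ℕ → ℕ) (n : ℕ) :
    ((List.range n).map f).sum = ∑ i ∈ Finset.range n, f i := by
  induction n with
  | zero => simp
  | succ n ih =>
    rw [List.range_succ, List.map_append, List.sum_append, Finset.sum_range_succ, ih]
    simp

lemma run_sum (t n : ℕ) : (run t n).sum = ∑ i ∈ Finset.range n, (t - n - i) :=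
  map_range_sum _ n

lemma shape (t : ℕ) (ht : 2 ≤ t) (l : List ℕ) (hs : l.Pairwise (· > ·))
    (hpos : ∀ p ∈ l, 0 < p) (h1 : IsCore l t) (h2 : IsCore l (t+1))
    (hsum : l.sum = t*(t+1)/6) :
    ∃ n, 1 ≤ n ∧ 2*n ≤ t ∧
      (∑ i ∈ Finset.range n, (t - n - i)) = t*(t+1)/6 ∧ l = run t n := by
  have h6 : 6 ≤ t*(t+1) := by nlinarith
  have hm1 : 1 ≤ t*(t+1)/6 := (Nat.one_le_div_iff (by norm_num)).2 h6
  have hne : l ≠ [] := by rintro rfl; simp at hsum; omega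
  set n := l.length with hndef
  set a := l.getD 0 0 with hadef
  have hn1 : 1 ≤ n := by
    rw [hndef]
    exact List.length_pos_iff.2 hne
  have hb : a + n ≤ t := bound_of_core l t hs hpos hne (by omega) h1 h2
  have hlastmem : l.getD (n-1) 0 ∈ l := by
    rw [List.getD_eq_getElem _ _ (by omega)]
    exact List.getElem_mem _
  have hlast : 1 ≤ l.getD (n-1) 0 := hpos _ hlastmem
  have hna : n ≤ a := by
    have := sorted_getD l hs (n-1) (by omega)
    omega
  have h2n : 2*n ≤ t := by omega
  have hle : ∀ i ∈ Finset.range n, l.getD i 0 ≤ t - n - i := by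
    intro i hi
    rw [Finset.mem_range] at hi
    have := sorted_getD l hs i hi
    omega
  have hsum2 : l.sum = ∑ i ∈ Finset.range n, l.getD i 0 := list_sum_getD l
  have hsle : ∑ i ∈ Finset.range n, l.getD i 0 ≤ ∑ i ∈ Finset.range n, (t - n - i) :=
    Finset.sum_le_sum hle
  have hFle := (F_facts t n hn1 h2n).1
  have hFeq : (∑ i ∈ Finset.range n, (t - n - i)) = t*(t+1)/6 := by omega
  have hsumeq : (∑ i ∈ Finset.range n, l.getD i 0) = ∑ i ∈ Finset.range n, (t - n - i) := by
    omega
  have hpt := (Finset.sum_eq_sum_iff_of_le hle).1 hsumeq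
  refine ⟨n, hn1, h2n, hFeq, ?_⟩
  apply List.ext_getElem (by rw [run_length])
  intro i hi1 hi2
  have hin : i < n := hi1
  have e1 : l[i] = l.getD i 0 := (List.getD_eq_getElem _ _ hi1).symm
  have e2 : (run t n)[i] = (run t n).getD i 0 := (List.getD_eq_getElem _ _ hi2).symm
  rw [e1, e2, run_getD t n i hin]
  exact hpt i (Finset.mem_range.2 hin)

lemma run_mem (t n : ℕ) (hn : 1 ≤ n) (h2 : 2*n ≤ t)
    (hF : (∑ i ∈ Finset.range n, (t - n - i)) = t*(t+1)/6) :
    (run t n).Pairwise (· > ·) ∧ (∀ p ∈ run t n, 0 < p) ∧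
      IsCore (run t n) t ∧ IsCore (run t n) (t+1) ∧ (run t n).sum = t*(t+1)/6 := by
  have hhl : (run t n).getD 0 0 + (run t n).length ≤ t := by
    rw [run_length, run_getD t n 0 (by omega)]
    omega
  refine ⟨run_sorted t n h2, run_pos t n h2, core_of_small _ _ (run_sorted t n h2) hhl,
    core_of_small _ _ (run_sorted t n h2) (by omega), ?_⟩
  rw [run_sum, hF]

/-- The number of (t, t+1)-core partitions with distinct parts of maximal size ⌊t(t+1)/6⌋
is 2 if t ≡ 1 (mod 3) and 1 otherwise. -/
theorem count_max_size_distinct_core (t : ℕ) (ht : 2 ≤ t) :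
    {l : List ℕ | l.Pairwise (· > ·) ∧ (∀ p ∈ l, 0 < p) ∧
      IsCore l t ∧ IsCore l (t + 1) ∧ l.sum = t * (t + 1) / 6}.ncard =
      if t % 3 = 1 then 2 else 1 := by
  rcases (by omega : t % 3 = 0 ∨ t % 3 = 1 ∨ t % 3 = 2) with h3 | h3 | h3
  · -- t = 3k
    obtain ⟨k, hk⟩ : ∃ k, t = 3*k := ⟨t/3, by omega⟩
    have hk1 : 1 ≤ k := by omega
    have hSet : {l : List ℕ | l.Pairwise (· > ·) ∧ (∀ p ∈ l, 0 < p) ∧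
        IsCore l t ∧ IsCore l (t + 1) ∧ l.sum = t * (t + 1) / 6} = {run t k} := by
      ext l
      simp only [Set.mem_setOf_eq, Set.mem_singleton_iff]
      constructor
      · rintro ⟨hs, hp, h1, h2, hsum⟩
        obtain ⟨n, hn1, hn2, hF, rfl⟩ := shape t ht l hs hp h1 h2 hsum
        have hd := (F_facts t n hn1 hn2).2.1 hF
        have : n = k := by
          rcases hd with ⟨_, h⟩ | ⟨h, _⟩ | ⟨h, _⟩ <;> omega
        rw [this]
      · rintro rfl
        exact run_mem t k hk1 (by omega)
          ((F_facts t k hk1 (by omega)).2.2 (Or.inl ⟨h3, hk⟩))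
    rw [hSet, if_neg (by omega), Set.ncard_singleton]
  · -- t = 3k+1
    obtain ⟨k, hk⟩ : ∃ k, t = 3*k+1 := ⟨t/3, by omega⟩
    have hk1 : 1 ≤ k := by omega
    have hSet : {l : List ℕ | l.Pairwise (· > ·) ∧ (∀ p ∈ l, 0 < p) ∧
        IsCore l t ∧ IsCore l (t + 1) ∧ l.sum = t * (t + 1) / 6} = {run t k, run t (k+1)} := by
      ext l
      simp only [Set.mem_setOf_eq, Set.mem_insert_iff, Set.mem_singleton_iff]
      constructor
      · rintro ⟨hs, hp, h1, h2, hsum⟩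
        obtain ⟨n, hn1, hn2, hF, rfl⟩ := shape t ht l hs hp h1 h2 hsum
        have hd := (F_facts t n hn1 hn2).2.1 hF
        have : n = k ∨ n = k + 1 := by
          rcases hd with ⟨h, _⟩ | ⟨_, h | h⟩ | ⟨h, _⟩ <;> omega
        rcases this with rfl | rfl
        · exact Or.inl rfl
        · exact Or.inr rfl
      · rintro (rfl | rfl)
        · exact run_mem t k hk1 (by omega)
            ((F_facts t k hk1 (by omega)).2.2 (Or.inr (Or.inl ⟨h3, Or.inl (by omega)⟩)))
        · exact run_mem t (k+1) (by omega) (by omega)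
            ((F_facts t (k+1) (by omega) (by omega)).2.2 (Or.inr (Or.inl ⟨h3, Or.inr (by omega)⟩)))
    have hne : run t k ≠ run t (k+1) := by
      intro h
      have := congrArg List.length h
      rw [run_length, run_length] at this
      omega
    rw [hSet, if_pos h3, Set.ncard_pair hne]
  · -- t = 3k+2
    obtain ⟨k, hk⟩ : ∃ k, t = 3*k+2 := ⟨t/3, by omega⟩
    have hSet : {l : List ℕ | l.Pairwise (· > ·) ∧ (∀ p ∈ l, 0 < p) ∧
        IsCore l t ∧ IsCore l (t + 1) ∧ l.sum = t * (t + 1) / 6} = {run t (k+1)} := by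
      ext l
      simp only [Set.mem_setOf_eq, Set.mem_singleton_iff]
      constructor
      · rintro ⟨hs, hp, h1, h2, hsum⟩
        obtain ⟨n, hn1, hn2, hF, rfl⟩ := shape t ht l hs hp h1 h2 hsum
        have hd := (F_facts t n hn1 hn2).2.1 hF
        have : n = k + 1 := by
          rcases hd with ⟨h, _⟩ | ⟨h, _⟩ | ⟨_, h⟩ <;> omega
        rw [this]
      · rintro rfl
        exact run_mem t (k+1) (by omega) (by omega)
          ((F_facts t (k+1) (by omega) (by omega)).2.2 (Or.inr (Or.inr ⟨h3, by omega⟩)))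
    rw [hSet, if_neg (by omega), Set.ncard_singleton]
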